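/- Let α ∈ ℝ, p ∈ ℂ, r > 0, and let u be analytic on the punctured disc {z ∈ ℂ : 0 < |z − p| < r} and satisfy u''(z) = 2u(z)³ + z·u(z) − α there, with a simple pole at p of residue +1, i.e. (z − p)·u(z) → 1 as z → p. Then the Bäcklund transform v(z) := −u(z) + (2α+1)/f(z), where f(z) := 2u(z)² − 2u'(z) + z, is defined on a punctured neighbourhood of p and has a simple pole at p with residue −1: (z − p)·v(z) → −1 as z → p. Moreover, the function h(z) := v(z) + 1/(z − p) extends analytically to p with h(p) = 0, h'(p) = p/6, and h''(p) = (α + 2)/2, i.e. v(z) = −1/(z − p) + (p/6)(z − p) + ((α + 2)/4)(z − p)² + O((z − p)³) as z → p. -/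

import Mathlib

open Filter Topology Set Metric

lemma ev_deriv_eq {f g : ℂ → ℂ} {p : ℂ}
    (h : ∀ᶠ z in 𝓝[≠] p, f z = g z) :
    ∀ᶠ z in 𝓝[≠] p, deriv f z = deriv g z := by
  rw [eventually_nhdsWithin_iff] at h ⊢
  filter_upwards [h.eventually_nhds] with z hz hzp
  have hne : ∀ᶠ y in 𝓝 z, y ≠ p := eventually_ne_nhds hzp
  have heq : f =ᶠ[𝓝 z] g := by
    filter_upwards [hz, hne] with y h1 h2 using h1 h2
  exact heq.deriv_eq

lemma analyticAt_of_deriv {f : ℂ → ℂ} {p : ℂ} (h : AnalyticAt ℂ f p) :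
    AnalyticAt ℂ (deriv f) p :=
  AnalyticOnNhd.deriv (s := {z | AnalyticAt ℂ f z}) (fun _ hz => hz) p h

lemma analyticAt_dslope' {F : ℂ → ℂ} {p : ℂ} (h : AnalyticAt ℂ F p) :
    AnalyticAt ℂ (dslope F p) p := by
  have hmem : {z | AnalyticAt ℂ F z} ∈ 𝓝 p := h.eventually_analyticAt
  have hdo : DifferentiableOn ℂ F {z | AnalyticAt ℂ F z} :=
    fun z hz => hz.differentiableAt.differentiableWithinAt
  exact ((Complex.differentiableOn_dslope hmem).2 hdo).analyticAt hmem


/-- The auxiliary function `f(z) = 2 u(z)^2 - 2 u'(z) + z` appearing in the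
Bäcklund transformation for Painlevé II, in the complex setting. -/
noncomputable def piiFC (u : ℂ → ℂ) : ℂ → ℂ :=
  fun z => 2 * (u z) ^ 2 - 2 * deriv u z + z

/-- The Bäcklund transform `v(z) = -u(z) + (2α+1)/f(z)` of a solution `u`
of Painlevé II with parameter `α`, in the complex setting. -/
noncomputable def backlundC (α : ℝ) (u : ℂ → ℂ) : ℂ → ℂ :=
  fun z => -u z + (2 * (α : ℂ) + 1) / piiFC u z

/-- if `u` solves Painlevé II on a punctured disc around `p`
with a simple pole of residue `+1` at `p`, then the Bäcklund transform
`v = -u + (2α+1)/f` is defined on a punctured neighbourhood of `p`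
(`f` is nonvanishing there) and has a simple pole at `p` with residue `-1`;
moreover `h(z) = v(z) + 1/(z-p)` extends analytically to `p` with
`h(p) = 0`, `h'(p) = p/6` and `h''(p) = (α+2)/2`. -/
theorem backlundC_pole_residue_minus_one (α : ℝ) (p : ℂ) (r : ℝ) (hr : 0 < r)
    (u : ℂ → ℂ) (hu : AnalyticOnNhd ℂ u (ball p r \ {p}))
    (hPII : ∀ z ∈ ball p r \ {p},
      deriv (deriv u) z = 2 * (u z) ^ 3 + z * u z - (α : ℂ))
    (hpole : Tendsto (fun z => (z - p) * u z) (𝓝[≠] p) (𝓝 1)) :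
    (∀ᶠ z in 𝓝[≠] p, piiFC u z ≠ 0) ∧
    Tendsto (fun z => (z - p) * backlundC α u z) (𝓝[≠] p) (𝓝 (-1)) ∧
    ∃ H : ℂ → ℂ, AnalyticAt ℂ H p ∧
      (∀ᶠ z in 𝓝[≠] p, H z = backlundC α u z + 1 / (z - p)) ∧
      H p = 0 ∧ deriv H p = p / 6 ∧
      deriv (deriv H) p = ((α : ℂ) + 2) / 2 := by
  -- basic membership
  have hbm : ∀ᶠ z in 𝓝[≠] p, z ∈ ball p r \ {p} := by
    filter_upwards [mem_nhdsWithin_of_mem_nhds (ball_mem_nhds p hr), self_mem_nhdsWithin]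
      with z h1 h2
    exact ⟨h1, h2⟩
  have hnep : ∀ᶠ z in 𝓝[≠] p, z ≠ p := self_mem_nhdsWithin
  -- the analytic extension U of (z-p) * u z
  set U : ℂ → ℂ := Function.update (fun z => (z - p) * u z) p 1 with hUdef
  have hUeq : ∀ᶠ z in 𝓝[≠] p, U z = (z - p) * u z := by
    filter_upwards [hnep] with z hz
    exact Function.update_of_ne hz _ _
  have hUp : U p = 1 := Function.update_self _ _ _
  have hUt : Tendsto U (𝓝[≠] p) (𝓝 1) := hpole.congr' (hUeq.mono fun z h => h.symm)
  have hUc : ContinuousAt U p := by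
    rw [ContinuousAt, hUp, ← nhdsNE_sup_pure]
    refine hUt.sup ?_
    simpa [hUp] using (tendsto_pure_nhds U p)
  have hUd : ∀ᶠ z in 𝓝[≠] p, DifferentiableAt ℂ U z := by
    filter_upwards [hbm] with z hz
    have hz' : z ≠ p := hz.2
    have hev : U =ᶠ[𝓝 z] (fun w => (w - p) * u w) := by
      filter_upwards [eventually_ne_nhds hz'] with y hy
      exact Function.update_of_ne hy _ _
    exact (((differentiableAt_id.sub_const p).mul
      (hu z hz).differentiableAt)).congr_of_eventuallyEq hev
  have hUa : AnalyticAt ℂ U p :=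
    Complex.analyticAt_of_differentiable_on_punctured_nhds_of_continuousAt hUd hUc
  -- g and its dslopes
  set g : ℂ → ℂ := dslope U p with hgdef
  have hga : AnalyticAt ℂ g p := analyticAt_dslope' hUa
  have hgU : ∀ z, (z - p) * g z = U z - 1 := fun z => by
    simpa [hUp, smul_eq_mul] using sub_smul_dslope U p z
  have hueq : ∀ᶠ z in 𝓝[≠] p, u z = (z - p)⁻¹ + g z := by
    filter_upwards [hUeq, hnep] with z h1 h2
    have hw : z - p ≠ 0 := sub_ne_zero.2 h2
    have h3 := hgU z
    rw [h1] at h3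
    field_simp
    linear_combination -h3
  -- dslope chain
  set g1 : ℂ → ℂ := dslope g p with hg1def
  have hg1a : AnalyticAt ℂ g1 p := analyticAt_dslope' hga
  have hg1 : ∀ z, (z - p) * g1 z = g z - g p := fun z => by
    simpa [smul_eq_mul] using sub_smul_dslope g p z
  set g2 : ℂ → ℂ := dslope g1 p with hg2def
  have hg2a : AnalyticAt ℂ g2 p := analyticAt_dslope' hg1a
  have hg2 : ∀ z, (z - p) * g2 z = g1 z - g1 p := fun z => by
    simpa [smul_eq_mul] using sub_smul_dslope g1 p z
  have hg'a : AnalyticAt ℂ (deriv g) p := analyticAt_of_deriv hga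
  have hg''a : AnalyticAt ℂ (deriv (deriv g)) p := analyticAt_of_deriv hg'a
  -- first derivative of u on the punctured neighbourhood
  have hG1 : ∀ᶠ z in 𝓝[≠] p,
      deriv (fun w => (w - p)⁻¹ + g w) z = -(1/(z - p)^2) + deriv g z := by
    filter_upwards [hga.eventually_analyticAt.filter_mono nhdsWithin_le_nhds, hnep]
      with z hz hz'
    have h1 : HasDerivAt (fun w => (w - p)⁻¹) (-(1/(z - p)^2)) z := by
      have h0 := ((hasDerivAt_id z).sub_const p).inv (sub_ne_zero.2 hz')
      refine h0.congr_deriv ?_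
      simp only [id]
      ring
    exact (h1.add hz.differentiableAt.hasDerivAt).deriv
  have hud1 : ∀ᶠ z in 𝓝[≠] p, deriv u z = -(1/(z - p)^2) + deriv g z := by
    filter_upwards [ev_deriv_eq hueq, hG1] with z h1 h2
    rw [h1, h2]
  -- second derivative of u
  have hG2 : ∀ᶠ z in 𝓝[≠] p,
      deriv (fun w => -(1/(w - p)^2) + deriv g w) z
        = 2/(z - p)^3 + deriv (deriv g) z := by
    filter_upwards [hg'a.eventually_analyticAt.filter_mono nhdsWithin_le_nhds, hnep]
      with z hz hz'
    have hw : z - p ≠ 0 := sub_ne_zero.2 hz'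
    have h1 : HasDerivAt (fun w => -(1/(w - p)^2)) (2/(z - p)^3) z := by
      have h0 : HasDerivAt (fun w : ℂ => ((w - p)^2)⁻¹)
          (-((2:ℕ) * (z - p)^(2-1) * 1) / ((z - p)^2)^2) z :=
        (((hasDerivAt_id z).sub_const p).pow 2).inv (pow_ne_zero 2 hw)
      have heq : (fun w : ℂ => -(1/(w - p)^2)) = fun w => -(((w - p)^2)⁻¹) := by
        funext w; rw [one_div]
      rw [heq]
      refine h0.neg.congr_deriv ?_
      rw [show (2:ℕ) - 1 = 1 from rfl, pow_one, mul_one]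
      push_cast
      rw [neg_div, neg_neg, div_eq_div_iff (pow_ne_zero 2 (pow_ne_zero 2 hw)) (pow_ne_zero 3 hw)]
      ring
    exact (h1.add hz.differentiableAt.hasDerivAt).deriv
  have hud2 : ∀ᶠ z in 𝓝[≠] p,
      deriv (deriv u) z = 2/(z - p)^3 + deriv (deriv g) z := by
    filter_upwards [ev_deriv_eq hud1, hG2] with z h1 h2
    rw [h1, h2]
  -- master identity and E1
  have hE1 : ∀ᶠ z in 𝓝[≠] p,
      (z - p)^2 * deriv (deriv g) z = 6 * g z + (z - p) * (6 * (g z)^2 + p)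
        + (z - p)^2 * (2 * (g z)^3 + 1 + z * g z - (α:ℂ)) := by
    filter_upwards [hud2, hbm, hueq, hnep] with z h2 hb he hz'
    have hw : z - p ≠ 0 := sub_ne_zero.2 hz'
    have hm := hPII z hb
    rw [h2, he] at hm
    rw [div_eq_mul_inv, ← inv_pow] at hm
    have ht : (z - p) * (z - p)⁻¹ = 1 := mul_inv_cancel₀ hw
    linear_combination (z - p)^2 * hm + (6 * g z * ((z - p) * (z - p)⁻¹ + 1) + 6 * (z - p) * (g z)^2 + z * (z - p)) * ht
  -- limits along the punctured filter
  have t0 : Tendsto (fun z : ℂ => z - p) (𝓝[≠] p) (𝓝 0) := by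
    have hc : ContinuousAt (fun z : ℂ => z - p) p := by fun_prop
    simpa using hc.tendsto.mono_left nhdsWithin_le_nhds
  have tg : Tendsto g (𝓝[≠] p) (𝓝 (g p)) :=
    hga.continuousAt.tendsto.mono_left nhdsWithin_le_nhds
  have tg1 : Tendsto g1 (𝓝[≠] p) (𝓝 (g1 p)) :=
    hg1a.continuousAt.tendsto.mono_left nhdsWithin_le_nhds
  have tD : Tendsto (deriv (deriv g)) (𝓝[≠] p) (𝓝 (deriv (deriv g) p)) :=
    hg''a.continuousAt.tendsto.mono_left nhdsWithin_le_nhds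
  -- g p = 0
  have hgp : g p = 0 := by
    have hL : Tendsto (fun z => (z - p)^2 * deriv (deriv g) z) (𝓝[≠] p) (𝓝 0) := by
      simpa using (t0.pow 2).mul tD
    have hR : Tendsto (fun z => 6 * g z + (z - p) * (6 * (g z)^2 + p)
        + (z - p)^2 * (2 * (g z)^3 + 1 + z * g z - (α:ℂ))) (𝓝[≠] p) (𝓝 (6 * g p)) := by
      have hc : ContinuousAt (fun z => 6 * g z + (z - p) * (6 * (g z)^2 + p)
          + (z - p)^2 * (2 * (g z)^3 + 1 + z * g z - (α:ℂ))) p := by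
        have := hga.continuousAt; fun_prop
      simpa using hc.tendsto.mono_left nhdsWithin_le_nhds
    have h0 := tendsto_nhds_unique (hL.congr' hE1) hR
    have h6 : (6:ℂ) ≠ 0 := by norm_num
    exact (mul_eq_zero.mp h0.symm).resolve_left h6
  have hgz : ∀ z, g z = (z - p) * g1 z := fun z => by
    have h := hg1 z; rw [hgp, sub_zero] at h; exact h.symm
  -- E2 and value of g1 at p
  have hE2 : ∀ᶠ z in 𝓝[≠] p,
      (z - p) * deriv (deriv g) z = 6 * g1 z + (6 * (g z)^2 + p)
        + (z - p) * (2 * (g z)^3 + 1 + z * g z - (α:ℂ)) := by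
    filter_upwards [hE1, hnep] with z h1 hz'
    have hw : z - p ≠ 0 := sub_ne_zero.2 hz'
    apply mul_left_cancel₀ hw
    linear_combination h1 + 6 * hgz z
  have hg1p : g1 p = -p/6 := by
    have hL : Tendsto (fun z => (z - p) * deriv (deriv g) z) (𝓝[≠] p) (𝓝 0) := by
      simpa using t0.mul tD
    have hR : Tendsto (fun z => 6 * g1 z + (6 * (g z)^2 + p)
        + (z - p) * (2 * (g z)^3 + 1 + z * g z - (α:ℂ))) (𝓝[≠] p)
        (𝓝 (6 * g1 p + p)) := by
      have hc : ContinuousAt (fun z => 6 * g1 z + (6 * (g z)^2 + p)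
          + (z - p) * (2 * (g z)^3 + 1 + z * g z - (α:ℂ))) p := by
        have h1 := hga.continuousAt; have h2 := hg1a.continuousAt; fun_prop
      have := hc.tendsto.mono_left (nhdsWithin_le_nhds (s := {p}ᶜ))
      simpa [hgp] using this
    have h0 := tendsto_nhds_unique (hL.congr' hE2) hR
    linear_combination (-1/6 : ℂ) * h0
  have hg'p : deriv g p = -p/6 := by
    rw [← dslope_same g p]; exact hg1p
  -- E3 and second derivative of g at p
  have hE3 : ∀ᶠ z in 𝓝[≠] p,
      deriv (deriv g) z = 6 * g2 z + 6 * (z - p) * (g1 z)^2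
        + (2 * (g z)^3 + 1 + z * g z - (α:ℂ)) := by
    filter_upwards [hE2, hnep] with z h1 hz'
    have hw : z - p ≠ 0 := sub_ne_zero.2 hz'
    apply mul_left_cancel₀ hw
    linear_combination h1 - 6 * hg2 z + 6 * (g z + (z - p) * g1 z) * hgz z + 6 * hg1p
  have hDp : deriv (deriv g) p = 6 * g2 p + 1 - (α:ℂ) := by
    have hR : Tendsto (fun z => 6 * g2 z + 6 * (z - p) * (g1 z)^2
        + (2 * (g z)^3 + 1 + z * g z - (α:ℂ))) (𝓝[≠] p)
        (𝓝 (6 * g2 p + 1 - (α:ℂ))) := by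
      have hc : ContinuousAt (fun z => 6 * g2 z + 6 * (z - p) * (g1 z)^2
          + (2 * (g z)^3 + 1 + z * g z - (α:ℂ))) p := by
        have h1 := hga.continuousAt; have h2 := hg1a.continuousAt
        have h3 := hg2a.continuousAt; fun_prop
      have := hc.tendsto.mono_left (nhdsWithin_le_nhds (s := {p}ᶜ))
      simp only [sub_self, zero_mul, mul_zero, add_zero, zero_add, hgp] at this
      convert this using 2
      ring
    exact tendsto_nhds_unique (tD.congr' hE3) hR
  have hder_g : (fun z => deriv g z) =ᶠ[𝓝 p] fun z => g1 z + (z - p) * deriv g1 z := by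
    filter_upwards [hg1a.eventually_analyticAt] with z hz
    have h1 : HasDerivAt (fun w => (w - p) * g1 w) (1 * g1 z + (z - p) * deriv g1 z) z :=
      ((hasDerivAt_id z).sub_const p).mul hz.differentiableAt.hasDerivAt
    have h2 := h1.deriv
    have h3 : g = fun w => (w - p) * g1 w := funext hgz
    rw [← h3] at h2
    rw [h2]; ring
  have hD2 : deriv (deriv g) p = 2 * deriv g1 p := by
    have h0 := hder_g.deriv_eq
    rw [h0]
    have h1 : HasDerivAt (fun z => g1 z + (z - p) * deriv g1 z)
        (deriv g1 p + (1 * deriv g1 p + (p - p) * deriv (deriv g1) p)) p :=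
      (hg1a.differentiableAt.hasDerivAt).add
        (((hasDerivAt_id p).sub_const p).mul
          (analyticAt_of_deriv hg1a).differentiableAt.hasDerivAt)
    rw [h1.deriv]; ring
  have hg2p : g2 p = deriv g1 p := dslope_same g1 p
  have hgpp : deriv (deriv g) p = ((α:ℂ) - 1)/2 := by
    have h0 := hDp
    rw [hD2, hg2p] at *
    linear_combination (-1/2 : ℂ) * h0
  -- the function F with piiFC u = F/(z-p)^2
  set E : ℂ → ℂ := fun z => 4 * g1 z + 2 * (g z)^2 - 2 * deriv g z + z with hEdef
  have hEa : AnalyticAt ℂ E p :=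
    (((analyticAt_const.mul hg1a).add (analyticAt_const.mul (hga.pow 2))).sub
      (analyticAt_const.mul hg'a)).add analyticAt_id
  set F : ℂ → ℂ := fun z => 4 + (z - p)^2 * E z with hFdef
  have hFa : AnalyticAt ℂ F p :=
    analyticAt_const.add (((analyticAt_id.sub analyticAt_const).pow 2).mul hEa)
  have hFp : F p = 4 := by simp [hFdef]
  have hF4 : F p ≠ 0 := by rw [hFp]; norm_num
  have hFne : ∀ᶠ z in 𝓝 p, F z ≠ 0 := hFa.continuousAt.eventually_ne hF4
  have hFne' : ∀ᶠ z in 𝓝[≠] p, F z ≠ 0 := hFne.filter_mono nhdsWithin_le_nhds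
  have hfF : ∀ᶠ z in 𝓝[≠] p, piiFC u z = F z / (z - p)^2 := by
    filter_upwards [hueq, hud1, hnep] with z h1 h2 hz'
    have hw : z - p ≠ 0 := sub_ne_zero.2 hz'
    simp only [piiFC, hFdef, hEdef, h1, h2]
    rw [hgz z]
    field_simp
    ring
  have conj1 : ∀ᶠ z in 𝓝[≠] p, piiFC u z ≠ 0 := by
    filter_upwards [hfF, hFne', hnep] with z h1 h2 hz'
    rw [h1]
    exact div_ne_zero h2 (pow_ne_zero 2 (sub_ne_zero.2 hz'))
  -- the analytic extension H of v + 1/(z-p)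
  set H : ℂ → ℂ := fun z => -g z + (2*(α:ℂ)+1) * ((z - p)^2 / F z) with hHdef
  have hHa : AnalyticAt ℂ H p :=
    (hga.neg).add (analyticAt_const.mul
      (((analyticAt_id.sub analyticAt_const).pow 2).div hFa hF4))
  have hHev : ∀ᶠ z in 𝓝[≠] p, H z = backlundC α u z + 1/(z - p) := by
    filter_upwards [hueq, hfF, hFne', hnep] with z h1 h2 h3 hz'
    have hw : z - p ≠ 0 := sub_ne_zero.2 hz'
    simp only [backlundC, hHdef, h1, h2]
    field_simp
    ring
  have hHp : H p = 0 := by simp [hHdef, hgp]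
  have hHd1 : deriv H p = p/6 := by
    have h1 : HasDerivAt (fun z => (z - p)^2 / F z)
        (((2:ℕ) * (p - p)^(2-1) * 1 * F p - (p - p)^2 * deriv F p) / (F p)^2) p :=
      (((hasDerivAt_id p).sub_const p).pow 2).div hFa.differentiableAt.hasDerivAt hF4
    have h2 := (hga.differentiableAt.hasDerivAt.neg).add (h1.const_mul (2*(α:ℂ)+1))
    rw [hHdef, (show HasDerivAt (fun z => -g z + (2*(α:ℂ)+1) * ((z - p)^2 / F z)) _ p from h2).deriv, hg'p]
    simp
    ring
  -- second derivative of H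
  set K : ℂ → ℂ := fun z => (F z)⁻¹ with hKdef
  have hKa : AnalyticAt ℂ K p := hFa.inv hF4
  have hK'a : AnalyticAt ℂ (deriv K) p := analyticAt_of_deriv hKa
  have hDH : (fun z => deriv H z) =ᶠ[𝓝 p]
      fun z => -(deriv g z) + (2*(α:ℂ)+1) * (2 * ((z - p) * K z) + (z - p)^2 * deriv K z) := by
    filter_upwards [hga.eventually_analyticAt, hKa.eventually_analyticAt, hFne] with z h1 h2 h3
    have e0 : HasDerivAt (fun w => (w - p)^2 * K w)
        ((2:ℕ) * (z - p)^(2-1) * 1 * K z + (z - p)^2 * deriv K z) z :=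
      (((hasDerivAt_id z).sub_const p).pow 2).mul h2.differentiableAt.hasDerivAt
    have e1 : HasDerivAt (fun w => (w - p)^2 / F w)
        ((2:ℕ) * (z - p)^(2-1) * 1 * K z + (z - p)^2 * deriv K z) z := by
      have heq : (fun w : ℂ => (w - p)^2 / F w) = fun w => (w - p)^2 * K w := by
        funext w; rw [div_eq_mul_inv, hKdef]
      rw [heq]; exact e0
    have h4 := (show HasDerivAt (fun w => -g w + (2*(α:ℂ)+1) * ((w - p)^2 / F w)) _ z from (h1.differentiableAt.hasDerivAt.neg).add (e1.const_mul (2*(α:ℂ)+1))).deriv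
    rw [hHdef, h4]
    push_cast
    ring
  have hHd2 : deriv (deriv H) p = ((α:ℂ) + 2)/2 := by
    have h0 := hDH.deriv_eq
    have a1 : HasDerivAt (fun y => 2 * ((y - p) * K y))
        (2 * (1 * K p + (p - p) * deriv K p)) p :=
      (((hasDerivAt_id p).sub_const p).mul hKa.differentiableAt.hasDerivAt).const_mul 2
    have a2 : HasDerivAt (fun y => (y - p)^2 * deriv K y)
        ((2:ℕ) * (p - p)^(2-1) * 1 * deriv K p + (p - p)^2 * deriv (deriv K) p) p :=
      (((hasDerivAt_id p).sub_const p).pow 2).mul hK'a.differentiableAt.hasDerivAt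
    have a3 : HasDerivAt (fun y => -(deriv g y)) (-(deriv (deriv g) p)) p :=
      (hg'a.differentiableAt.hasDerivAt).neg
    have total := a3.add ((a1.add a2).const_mul (2*(α:ℂ)+1))
    rw [h0, (show HasDerivAt (fun z => -deriv g z + (2*(α:ℂ)+1) * (2 * ((z - p) * K z) + (z - p)^2 * deriv K z)) _ p from total).deriv, hgpp]
    have hKp : K p = 4⁻¹ := by rw [hKdef]; simp [hFp]
    rw [hKp]
    push_cast
    ring
  -- residue of v
  have conj2 : Tendsto (fun z => (z - p) * backlundC α u z) (𝓝[≠] p) (𝓝 (-1)) := by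
    have hev : ∀ᶠ z in 𝓝[≠] p, (z - p) * H z - 1 = (z - p) * backlundC α u z := by
      filter_upwards [hHev, hnep] with z h1 hz'
      have hw : z - p ≠ 0 := sub_ne_zero.2 hz'
      rw [h1]
      field_simp
      ring
    have hL : Tendsto (fun z => (z - p) * H z - 1) (𝓝[≠] p) (𝓝 (-1)) := by
      have := (t0.mul (hHa.continuousAt.tendsto.mono_left
        (nhdsWithin_le_nhds (s := {p}ᶜ)))).sub_const 1
      simpa using this
    exact hL.congr' hev
  exact ⟨conj1, conj2, H, hHa, hHev, hHp, hHd1, hHd2⟩
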